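/- Stanford's pointwise convergence property: with H₁ = [[1/2, 0],[0, 2]] and H₂ the rotation by 30°, for every vector x ∈ ℝ² there exists a sequence (Ā_n) with each Ā_n ∈ {H₁, H₂} such that Ā_n ⋯ Ā_1 x → 0 as n → ∞; moreover the convergence is geometric: there exist q < 1 and a subsequence of times along which the norm contracts by a factor q. -/

import Mathlib

/-- Stanford's matrix `H₁ = diag(1/2, 2)`. -/
noncomputable def H1 : Matrix (Fin 2) (Fin 2) ℝ := !![1/2, 0; 0, 2]

/-- Stanford's matrix `H₂`, the rotation by 30°. -/
noncomputable def H2 : Matrix (Fin 2) (Fin 2) ℝ :=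
  !![Real.sqrt 3 / 2, 1/2; -(1/2), Real.sqrt 3 / 2]

/-- `prodRev F n = F n * ⋯ * F 1` (with `prodRev F 0 = 1`). -/
def prodRev (F : ℕ → Matrix (Fin 2) (Fin 2) ℝ) : ℕ → Matrix (Fin 2) (Fin 2) ℝ
  | 0 => 1
  | n + 1 => F (n + 1) * prodRev F n

/-- The Euclidean norm on `ℝ²`. -/
noncomputable def enorm (x : Fin 2 → ℝ) : ℝ := Real.sqrt (x 0 ^ 2 + x 1 ^ 2)

namespace Stmt15Aux

/-- `mulVec` for explicit 2×2 matrices. -/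
lemma mulVec2 (a b c d : ℝ) (v : Fin 2 → ℝ) :
    (Matrix.mulVec !![a,b;c,d] v) = ![a*v 0 + b*v 1, c*v 0 + d*v 1] := by
  funext i
  fin_cases i <;> simp [Matrix.mulVec, dotProduct, Fin.sum_univ_two]

lemma H2_mulVec (v : Fin 2 → ℝ) :
    H2.mulVec v = ![(Real.sqrt 3 * v 0 + v 1)/2, (-(v 0) + Real.sqrt 3 * v 1)/2] := by
  rw [H2, mulVec2]
  funext i; fin_cases i <;> · simp; ring

lemma H1_mulVec (v : Fin 2 → ℝ) :
    H1.mulVec v = ![v 0 / 2, 2 * v 1] := by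
  rw [H1, mulVec2]
  funext i; fin_cases i <;> simp <;> ring

lemma enorm_pair (p q : ℝ) : _root_.enorm ![p, q] = Real.sqrt (p^2 + q^2) := by
  rw [_root_.enorm]; simp

lemma enorm_nonneg (v : Fin 2 → ℝ) : 0 ≤ _root_.enorm v := Real.sqrt_nonneg _

lemma le_of_sq_le_sq' (x y : ℝ) (h : x^2 ≤ y^2) (hy : 0 ≤ y) : x ≤ y := by
  calc x ≤ |x| := le_abs_self x
  _ = Real.sqrt (x^2) := (Real.sqrt_sq_eq_abs x).symm
  _ ≤ Real.sqrt (y^2) := Real.sqrt_le_sqrt h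
  _ = |y| := Real.sqrt_sq_eq_abs y
  _ = y := abs_of_nonneg hy

/-- The "good sector" predicate: `H1` contracts the Euclidean norm on it. -/
def Q (w : Fin 2 → ℝ) : Prop :=
  Real.sqrt 3 * (w 0 ^ 2 + w 1 ^ 2) ≤ 2 * (w 0 ^ 2 - w 1 ^ 2)

lemma core1 (s X Y R : ℝ) (hs : s^2 = 3) (hs0 : 0 ≤ s) (hR : 0 ≤ R)
    (hR2 : R^2 = X^2 + Y^2) (hX : 0 ≤ X) (hY : 0 ≤ Y) (hXY : X^2 ≤ 3*Y^2) :
    s*R ≤ X + s*Y := by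
  have hu2 : (s*Y)^2 = 3*Y^2 := by rw [mul_pow, hs]
  have hu3 : (s*R)^2 = 3*R^2 := by rw [mul_pow, hs]
  have hsY : 0 ≤ s*Y := mul_nonneg hs0 hY
  have hXle : X ≤ s*Y := le_of_sq_le_sq' _ _ (by linarith) hsY
  refine le_of_sq_le_sq' _ _ ?_ (by positivity)
  nlinarith [mul_nonneg hX (sub_nonneg.mpr hXle)]

/-- Abstract core case analysis: among the six 60°-rotates of `(X, Y)`,
one has first coordinate at least `(√3/2) R`. -/
lemma core (s X Y R : ℝ) (hs : s^2 = 3) (hs0 : 0 ≤ s) (hR : 0 ≤ R)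
    (hR2 : R^2 = X^2 + Y^2) :
    s*R ≤ 2*X ∨ s*R ≤ X + s*Y ∨ s*R ≤ -X + s*Y ∨ s*R ≤ -(2*X) ∨
      s*R ≤ -(X + s*Y) ∨ s*R ≤ X - s*Y := by
  by_cases h0 : s*R ≤ 2*X
  · exact Or.inl h0
  by_cases h3 : s*R ≤ -(2*X)
  · exact Or.inr (Or.inr (Or.inr (Or.inl h3)))
  push_neg at h0 h3
  have hu3 : (s*R)^2 = 3*R^2 := by rw [mul_pow, hs]
  have hsR : 0 ≤ s * R := mul_nonneg hs0 hR
  have hXY : X^2 ≤ 3 * Y^2 := by nlinarith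
  rcases le_or_gt 0 Y with hY | hY
  · rcases le_or_gt 0 X with hX | hX
    · exact Or.inr (Or.inl (core1 s X Y R hs hs0 hR hR2 hX hY hXY))
    · have h := core1 s (-X) Y R hs hs0 hR (by linarith [hR2, neg_sq X]) (by linarith) hY
        (by nlinarith)
      exact Or.inr (Or.inr (Or.inl (by linarith)))
  · rcases le_or_gt 0 X with hX | hX
    · have h := core1 s X (-Y) R hs hs0 hR (by linarith [hR2, neg_sq Y]) hX (by linarith)
        (by nlinarith)
      refine Or.inr (Or.inr (Or.inr (Or.inr (Or.inr (by linarith)))))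
    · have h := core1 s (-X) (-Y) R hs hs0 hR (by nlinarith) (by linarith) (by linarith)
        (by nlinarith)
      refine Or.inr (Or.inr (Or.inr (Or.inr (Or.inl (by linarith)))))

/-- Within at most 6 rotations by `H2`, every vector lands in the good sector. -/
lemma exists_k (v : Fin 2 → ℝ) : ∃ k, k < 6 ∧ Q ((H2.mulVec)^[k] v) := by
  have hs : Real.sqrt 3 ^ 2 = 3 := Real.sq_sqrt (by norm_num)
  have hs0 : 0 ≤ Real.sqrt 3 := Real.sqrt_nonneg 3
  set s := Real.sqrt 3 with hsdef
  set a := v 0 with ha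
  set b := v 1 with hb
  have hv : v = ![a, b] := by funext i; fin_cases i <;> rfl
  have step : ∀ p q : ℝ, H2.mulVec ![p, q] = ![(s*p + q)/2, (-p + s*q)/2] := by
    intro p q; rw [H2_mulVec]; simp [← hsdef]
  have i0 : (H2.mulVec)^[0] v = ![a, b] := by simpa using hv
  have i1 : (H2.mulVec)^[1] v = ![(s*a + b)/2, (-a + s*b)/2] := by
    rw [Function.iterate_one, hv, step]
  have i2 : (H2.mulVec)^[2] v = ![(a + s*b)/2, (-(s*a) + b)/2] := by
    rw [Function.iterate_succ_apply', i1, step]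
    funext i; fin_cases i <;> simp
    · linear_combination (a/2) * hs
    · linear_combination (b/2) * hs
  have i3 : (H2.mulVec)^[3] v = ![b, -a] := by
    rw [Function.iterate_succ_apply', i2, step]
    funext i; fin_cases i <;> simp
    · linear_combination (b/4) * hs
    · linear_combination (-a/4) * hs
  have i4 : (H2.mulVec)^[4] v = ![(s*b - a)/2, (-b - s*a)/2] := by
    rw [Function.iterate_succ_apply', i3, step]
    funext i; fin_cases i <;> · simp; ring
  have i5 : (H2.mulVec)^[5] v = ![(b - s*a)/2, (-(s*b) - a)/2] := by
    rw [Function.iterate_succ_apply', i4, step]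
    funext i; fin_cases i <;> simp
    · linear_combination (b/2) * hs
    · linear_combination (-a/2) * hs
  have hcore := core s (a^2 - b^2) (2*a*b) (a^2 + b^2) hs hs0 (by positivity) (by ring)
  rcases hcore with h | h | h | h | h | h
  · refine ⟨0, by norm_num, ?_⟩
    rw [i0]; show Q ![a, b]
    simp only [Q, Matrix.cons_val_zero, Matrix.cons_val_one, Matrix.head_cons, ← hsdef]
    linarith
  · refine ⟨1, by norm_num, ?_⟩
    rw [i1]; show Q ![(s*a + b)/2, (-a + s*b)/2]
    simp only [Q, Matrix.cons_val_zero, Matrix.cons_val_one, Matrix.head_cons, ← hsdef]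
    have eA : s*(((s*a + b)/2)^2 + ((-a + s*b)/2)^2) = s*(a^2 + b^2) := by
      linear_combination (s*(a^2+b^2)/4) * hs
    have eB : 2*(((s*a + b)/2)^2 - ((-a + s*b)/2)^2) = (a^2 - b^2) + s*(2*a*b) := by
      linear_combination ((a^2-b^2)/2) * hs
    linarith
  · refine ⟨2, by norm_num, ?_⟩
    rw [i2]; show Q ![(a + s*b)/2, (-(s*a) + b)/2]
    simp only [Q, Matrix.cons_val_zero, Matrix.cons_val_one, Matrix.head_cons, ← hsdef]
    have eA : s*(((a + s*b)/2)^2 + ((-(s*a) + b)/2)^2) = s*(a^2 + b^2) := by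
      linear_combination (s*(a^2+b^2)/4) * hs
    have eB : 2*(((a + s*b)/2)^2 - ((-(s*a) + b)/2)^2) = -(a^2 - b^2) + s*(2*a*b) := by
      linear_combination (-(a^2-b^2)/2) * hs
    linarith
  · refine ⟨3, by norm_num, ?_⟩
    rw [i3]; show Q ![b, -a]
    simp only [Q, Matrix.cons_val_zero, Matrix.cons_val_one, Matrix.head_cons, ← hsdef]
    linarith [sq_abs a, sq_abs b, neg_sq a]
  · refine ⟨4, by norm_num, ?_⟩
    rw [i4]; show Q ![(s*b - a)/2, (-b - s*a)/2]
    simp only [Q, Matrix.cons_val_zero, Matrix.cons_val_one, Matrix.head_cons, ← hsdef]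
    have eA : s*(((s*b - a)/2)^2 + ((-b - s*a)/2)^2) = s*(a^2 + b^2) := by
      linear_combination (s*(a^2+b^2)/4) * hs
    have eB : 2*(((s*b - a)/2)^2 - ((-b - s*a)/2)^2)
        = -((a^2 - b^2) + s*(2*a*b)) := by
      linear_combination (-(a^2-b^2)/2) * hs
    linarith
  · refine ⟨5, by norm_num, ?_⟩
    rw [i5]; show Q ![(b - s*a)/2, (-(s*b) - a)/2]
    simp only [Q, Matrix.cons_val_zero, Matrix.cons_val_one, Matrix.head_cons, ← hsdef]
    have eA : s*(((b - s*a)/2)^2 + ((-(s*b) - a)/2)^2) = s*(a^2 + b^2) := by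
      linear_combination (s*(a^2+b^2)/4) * hs
    have eB : 2*(((b - s*a)/2)^2 - ((-(s*b) - a)/2)^2) = (a^2 - b^2) - s*(2*a*b) := by
      linear_combination ((a^2-b^2)/2) * hs
    linarith

/-- The number of `H2`-rotations needed to land in the good sector. -/
noncomputable def kch (v : Fin 2 → ℝ) : ℕ := (exists_k v).choose

lemma kch_lt (v : Fin 2 → ℝ) : kch v < 6 := (exists_k v).choose_spec.1

lemma kch_Q (v : Fin 2 → ℝ) : Q ((H2.mulVec)^[kch v] v) := (exists_k v).choose_spec.2

/-- The vector at the start of each block of 7 matrices. -/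
noncomputable def wseq (x : Fin 2 → ℝ) : ℕ → (Fin 2 → ℝ)
  | 0 => x
  | m+1 => (H2.mulVec)^[6 - kch (wseq x m)]
      (H1.mulVec ((H2.mulVec)^[kch (wseq x m)] (wseq x m)))

/-- The constructed sequence of matrices: in block `m` (positions `7m+1,…,7m+7`),
apply `H2` for `kch` steps, then `H1`, then `H2` for the remaining steps. -/
noncomputable def Aseq (x : Fin 2 → ℝ) (n : ℕ) : Matrix (Fin 2) (Fin 2) ℝ :=
  if (n-1) % 7 = kch (wseq x ((n-1)/7)) then H1 else H2

lemma prodRev_succ_mulVec (F : ℕ → Matrix (Fin 2) (Fin 2) ℝ) (x : Fin 2 → ℝ) (n : ℕ) :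
    (prodRev F (n+1)).mulVec x = (F (n+1)).mulVec ((prodRev F n).mulVec x) := by
  rw [prodRev, Matrix.mulVec_mulVec]

lemma ublock_inner (x : Fin 2 → ℝ) (m : ℕ)
    (hbase : (prodRev (Aseq x) (7*m)).mulVec x = wseq x m) :
    ∀ j, j ≤ 7 → (prodRev (Aseq x) (7*m + j)).mulVec x =
      if j ≤ kch (wseq x m) then (H2.mulVec)^[j] (wseq x m)
      else (H2.mulVec)^[j - (kch (wseq x m) + 1)]
        (H1.mulVec ((H2.mulVec)^[kch (wseq x m)] (wseq x m))) := by
  intro j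
  induction j with
  | zero =>
    intro _
    simpa using hbase
  | succ j ihj =>
    intro hj7
    have hj : j ≤ 7 := by omega
    have ihj' := ihj (by omega)
    set k := kch (wseq x m) with hk
    have hA : Aseq x (7*m + j + 1) = if j = k then H1 else H2 := by
      unfold Aseq
      have e1 : 7*m + j + 1 - 1 = 7*m + j := by omega
      have e2 : (7*m + j) % 7 = j := by omega
      have e3 : (7*m + j) / 7 = m := by omega
      rw [e1, e2, e3, ← hk]
    have hstep : 7*m + (j+1) = (7*m + j) + 1 := by omega
    rw [hstep, prodRev_succ_mulVec, ihj', hA]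
    by_cases hlt : j < k
    · rw [if_neg (by omega), if_pos (by omega : j ≤ k), if_pos (by omega : j + 1 ≤ k)]
      exact (Function.iterate_succ_apply' _ _ _).symm
    by_cases heq : j = k
    · rw [if_pos heq, if_pos (by omega : j ≤ k), if_neg (by omega : ¬ j + 1 ≤ k)]
      rw [heq, show k + 1 - (k + 1) = 0 from by omega]
      rfl
    · rw [if_neg heq, if_neg (by omega : ¬ j ≤ k), if_neg (by omega : ¬ j + 1 ≤ k)]
      rw [show j + 1 - (k + 1) = (j - (k+1)) + 1 from by omega]
      exact (Function.iterate_succ_apply' _ _ _).symm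

lemma u7 (x : Fin 2 → ℝ) : ∀ m, (prodRev (Aseq x) (7*m)).mulVec x = wseq x m := by
  intro m
  induction m with
  | zero => simp [prodRev, Matrix.one_mulVec, wseq]
  | succ m ih =>
    have hk := kch_lt (wseq x m)
    have h := ublock_inner x m ih 7 le_rfl
    rw [show 7*(m+1) = 7*m + 7 from by omega, h, if_neg (by omega)]
    rw [show wseq x (m+1) = (H2.mulVec)^[6 - kch (wseq x m)]
      (H1.mulVec ((H2.mulVec)^[kch (wseq x m)] (wseq x m))) from rfl]
    rw [show 7 - (kch (wseq x m) + 1) = 6 - kch (wseq x m) from by omega]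

lemma enorm_H2 (v : Fin 2 → ℝ) : _root_.enorm (H2.mulVec v) = _root_.enorm v := by
  have hs : Real.sqrt 3 ^ 2 = 3 := Real.sq_sqrt (by norm_num)
  rw [H2_mulVec, enorm_pair, _root_.enorm]
  congr 1
  linear_combination ((v 0^2 + v 1^2)/4) * hs

lemma enorm_H2_iter (k : ℕ) (v : Fin 2 → ℝ) :
    _root_.enorm ((H2.mulVec)^[k] v) = _root_.enorm v := by
  induction k with
  | zero => rfl
  | succ k ih => rw [Function.iterate_succ_apply', enorm_H2, ih]

/-- The contraction factor. -/
noncomputable def qv : ℝ := Real.sqrt ((34 - 15 * Real.sqrt 3)/16)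

lemma qv_arg_pos : 0 < (34 - 15 * Real.sqrt 3)/16 := by
  have hs : Real.sqrt 3 ^ 2 = 3 := Real.sq_sqrt (by norm_num)
  have hs0 : 0 ≤ Real.sqrt 3 := Real.sqrt_nonneg 3
  nlinarith

lemma qv_pos : 0 < qv := Real.sqrt_pos.mpr qv_arg_pos

lemma qv_lt_one : qv < 1 := by
  have hs : Real.sqrt 3 ^ 2 = 3 := Real.sq_sqrt (by norm_num)
  have hs0 : 0 ≤ Real.sqrt 3 := Real.sqrt_nonneg 3
  have h1 : (34 - 15 * Real.sqrt 3)/16 < 1 := by nlinarith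
  calc qv < Real.sqrt 1 := Real.sqrt_lt_sqrt qv_arg_pos.le h1
  _ = 1 := Real.sqrt_one

lemma H1_contract (w : Fin 2 → ℝ) (hw : Q w) :
    _root_.enorm (H1.mulVec w) ≤ qv * _root_.enorm w := by
  rw [H1_mulVec, enorm_pair, _root_.enorm, qv, ← Real.sqrt_mul qv_arg_pos.le]
  apply Real.sqrt_le_sqrt
  unfold Q at hw
  nlinarith [hw]

lemma w_contract (x : Fin 2 → ℝ) (m : ℕ) :
    _root_.enorm (wseq x (m+1)) ≤ qv * _root_.enorm (wseq x m) := by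
  calc _root_.enorm (wseq x (m+1))
      = _root_.enorm (H1.mulVec ((H2.mulVec)^[kch (wseq x m)] (wseq x m))) := by
        rw [show wseq x (m+1) = (H2.mulVec)^[6 - kch (wseq x m)]
          (H1.mulVec ((H2.mulVec)^[kch (wseq x m)] (wseq x m))) from rfl]
        exact enorm_H2_iter _ _
  _ ≤ qv * _root_.enorm ((H2.mulVec)^[kch (wseq x m)] (wseq x m)) :=
        H1_contract _ (kch_Q _)
  _ = qv * _root_.enorm (wseq x m) := by rw [enorm_H2_iter]

lemma w_pow (x : Fin 2 → ℝ) (m : ℕ) : _root_.enorm (wseq x m) ≤ qv^m * _root_.enorm x := by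
  induction m with
  | zero => simp [wseq]
  | succ m ih =>
    calc _root_.enorm (wseq x (m+1)) ≤ qv * _root_.enorm (wseq x m) := w_contract x m
    _ ≤ qv * (qv^m * _root_.enorm x) := by
        exact mul_le_mul_of_nonneg_left ih qv_pos.le
    _ = qv^(m+1) * _root_.enorm x := by ring

lemma u_step (x : Fin 2 → ℝ) (n : ℕ) :
    _root_.enorm ((prodRev (Aseq x) (n+1)).mulVec x)
      ≤ _root_.enorm ((prodRev (Aseq x) n).mulVec x) := by
  have hb := u7 x (n/7)
  have h := ublock_inner x (n/7) hb (n % 7) (by omega)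
  have hn : 7*(n/7) + n % 7 = n := by omega
  rw [hn] at h
  rw [prodRev_succ_mulVec]
  have hA : Aseq x (n+1) = if n % 7 = kch (wseq x (n/7)) then H1 else H2 := by
    unfold Aseq
    rw [show n + 1 - 1 = n from by omega]
  rw [hA]
  by_cases hif : n % 7 = kch (wseq x (n/7))
  · rw [if_pos hif, h, if_pos (le_of_eq hif), hif]
    calc _root_.enorm (H1.mulVec ((H2.mulVec)^[kch (wseq x (n/7))] (wseq x (n/7))))
        ≤ qv * _root_.enorm ((H2.mulVec)^[kch (wseq x (n/7))] (wseq x (n/7))) :=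
          H1_contract _ (kch_Q _)
    _ ≤ 1 * _root_.enorm ((H2.mulVec)^[kch (wseq x (n/7))] (wseq x (n/7))) :=
          mul_le_mul_of_nonneg_right qv_lt_one.le (enorm_nonneg _)
    _ = _root_.enorm ((H2.mulVec)^[kch (wseq x (n/7))] (wseq x (n/7))) := one_mul _
  · rw [if_neg hif, enorm_H2]

lemma u_anti (x : Fin 2 → ℝ) :
    Antitone (fun n => _root_.enorm ((prodRev (Aseq x) n).mulVec x)) :=
  antitone_nat_of_succ_le (u_step x)

lemma abs_le_enorm (v : Fin 2 → ℝ) (i : Fin 2) : |v i| ≤ _root_.enorm v := by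
  fin_cases i
  · show |v 0| ≤ _root_.enorm v
    rw [_root_.enorm, ← Real.sqrt_sq_eq_abs]
    exact Real.sqrt_le_sqrt (by nlinarith [sq_nonneg (v 1)])
  · show |v 1| ≤ _root_.enorm v
    rw [_root_.enorm, ← Real.sqrt_sq_eq_abs]
    exact Real.sqrt_le_sqrt (by nlinarith [sq_nonneg (v 0)])

end Stmt15Aux

open Stmt15Aux in
/-- Stanford's pointwise convergence property: for every `x ∈ ℝ²` there is a
sequence of matrices from `{H₁, H₂}` whose running products send `x` to `0`;
moreover the convergence is geometric along a subsequence of times. -/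
theorem stmt15 (x : Fin 2 → ℝ) :
    ∃ A : ℕ → Matrix (Fin 2) (Fin 2) ℝ, (∀ k, A k = H1 ∨ A k = H2) ∧
      Filter.Tendsto (fun n => (prodRev A n).mulVec x) Filter.atTop (nhds 0) ∧
      ∃ q : ℝ, 0 < q ∧ q < 1 ∧ ∃ φ : ℕ → ℕ, StrictMono φ ∧
        ∀ m, _root_.enorm ((prodRev A (φ (m + 1))).mulVec x) ≤
          q * _root_.enorm ((prodRev A (φ m)).mulVec x) := by
  refine ⟨Aseq x, ?_, ?_, qv, qv_pos, qv_lt_one, (fun m => 7*m), ?_, ?_⟩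
  · intro k
    unfold Aseq
    split_ifs <;> simp
  · -- convergence to 0
    have hbd : ∀ n, _root_.enorm ((prodRev (Aseq x) n).mulVec x) ≤ qv^(n/7) * _root_.enorm x := by
      intro n
      calc _root_.enorm ((prodRev (Aseq x) n).mulVec x)
          ≤ _root_.enorm ((prodRev (Aseq x) (7*(n/7))).mulVec x) := u_anti x (by omega)
      _ = _root_.enorm (wseq x (n/7)) := by rw [u7]
      _ ≤ qv^(n/7) * _root_.enorm x := w_pow x (n/7)
    have hdiv : Filter.Tendsto (fun n : ℕ => n / 7) Filter.atTop Filter.atTop :=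
      Filter.tendsto_atTop_atTop.mpr fun b => ⟨7*b, fun n hn => by omega⟩
    have hq : Filter.Tendsto (fun m : ℕ => qv^m) Filter.atTop (nhds 0) :=
      tendsto_pow_atTop_nhds_zero_of_lt_one qv_pos.le qv_lt_one
    have hbt : Filter.Tendsto (fun n : ℕ => qv^(n/7) * _root_.enorm x) Filter.atTop (nhds 0) := by
      have := (hq.comp hdiv).mul_const (_root_.enorm x)
      simpa using this
    rw [tendsto_pi_nhds]
    intro i
    apply squeeze_zero_norm (fun n => ?_) (by simpa using hbt)
    calc ‖(prodRev (Aseq x) n).mulVec x i‖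
        = |(prodRev (Aseq x) n).mulVec x i| := rfl
    _ ≤ _root_.enorm ((prodRev (Aseq x) n).mulVec x) := abs_le_enorm _ i
    _ ≤ qv^(n/7) * _root_.enorm x := hbd n
  · -- strict monotonicity of φ
    intro a b hab
    simpa using by omega
  · -- geometric contraction along the subsequence
    intro m
    rw [u7, u7]
    exact w_contract x m
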